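/- There are exactly two partitions (as unordered set partitions) of the nine interior edges of K6 into three classes of pairwise noncrossing edges, namely {{13,14,46},{15,24,25},{26,35,36}} and {{13,36,46},{14,15,24},{25,26,35}}, where ab denotes the edge {a,b}. -/

import Mathlib

/-- The cyclic length of the chord joining vertices `a` and `b` of `K₆`,
whose vertices are labeled by `ZMod 6` in cyclic order around a circle. -/
def cycLen (a b : ZMod 6) : ℕ := min (b - a).val (a - b).val

/-- An interior edge of `K₆`: a 2-element set of vertices at cyclic distance at least 2. -/
def InteriorEdge (e : Finset (ZMod 6)) : Prop :=
  e.card = 2 ∧ ∀ a ∈ e, ∀ b ∈ e, a ≠ b → 2 ≤ cycLen a b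

/-- A short edge of `K₆`: a 2-element set of vertices at cyclic distance exactly 2. -/
def ShortEdge (e : Finset (ZMod 6)) : Prop :=
  e.card = 2 ∧ ∀ a ∈ e, ∀ b ∈ e, a ≠ b → cycLen a b = 2

/-- A long edge of `K₆`: a 2-element set of vertices at cyclic distance exactly 3. -/
def LongEdge (e : Finset (ZMod 6)) : Prop :=
  e.card = 2 ∧ ∀ a ∈ e, ∀ b ∈ e, a ≠ b → cycLen a b = 3

/-- `x` lies in the open cyclic arc from `a` to `b` (in the cyclic order of labels). -/
def InArc (a b x : ZMod 6) : Prop := 0 < (x - a).val ∧ (x - a).val < (b - a).val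

/-- Two chords `{a,b}` and `{c,d}` cross iff their endpoint sets are disjoint and
exactly one of `c`, `d` lies in the open cyclic arc from `a` to `b`. -/
def Crosses (e f : Finset (ZMod 6)) : Prop :=
  Disjoint e f ∧ ∃ a b c d : ZMod 6, a ≠ b ∧ c ≠ d ∧ e = {a, b} ∧ f = {c, d} ∧
    Xor' (InArc a b c) (InArc a b d)

/-- A partition of the interior edges of `K₆` into (nonempty, pairwise disjoint) classes
of pairwise noncrossing edges. -/
def IsSheetPartition (P : Finset (Finset (Finset (ZMod 6)))) : Prop :=
  (∀ C ∈ P, C.Nonempty) ∧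
  (∀ C ∈ P, ∀ D ∈ P, C ≠ D → Disjoint C D) ∧
  (∀ e : Finset (ZMod 6), InteriorEdge e ↔ ∃ C ∈ P, e ∈ C) ∧
  (∀ C ∈ P, ∀ e ∈ C, ∀ f ∈ C, e ≠ f → ¬ Crosses e f)

/-- The partition `{{13,14,46},{15,24,25},{26,35,36}}`. -/
def partA : Finset (Finset (Finset (ZMod 6))) :=
  {{({1, 3} : Finset (ZMod 6)), {1, 4}, {4, 6}},
   {({1, 5} : Finset (ZMod 6)), {2, 4}, {2, 5}},
   {({2, 6} : Finset (ZMod 6)), {3, 5}, {3, 6}}}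

/-- The partition `{{13,36,46},{14,15,24},{25,26,35}}`. -/
def partB : Finset (Finset (Finset (ZMod 6))) :=
  {{({1, 3} : Finset (ZMod 6)), {3, 6}, {4, 6}},
   {({1, 4} : Finset (ZMod 6)), {1, 5}, {2, 4}},
   {({2, 5} : Finset (ZMod 6)), {2, 6}, {3, 5}}}

section Aux
set_option linter.unreachableTactic false
set_option linter.unusedTactic false
-- auxiliary material for stmt_10
set_option maxRecDepth 100000

instance (a b x : ZMod 6) : Decidable (InArc a b x) := by unfold InArc; infer_instance
instance (e f : Finset (ZMod 6)) : Decidable (Crosses e f) := by unfold Crosses Xor'; infer_instance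
instance (e : Finset (ZMod 6)) : Decidable (InteriorEdge e) := by unfold InteriorEdge; infer_instance


def E9 : Finset (Finset (ZMod 6)) :=
  {{1, 3}, {2, 4}, {3, 5}, {4, 6}, {1, 5}, {2, 6}, {1, 4}, {2, 5}, {3, 6}}

def S1 : Finset (Finset (ZMod 6)) := {{1, 4}, {1, 3}, {2, 4}, {4, 6}, {1, 5}}
def S2 : Finset (Finset (ZMod 6)) := {{2, 5}, {2, 4}, {3, 5}, {1, 5}, {2, 6}}
def S3 : Finset (Finset (ZMod 6)) := {{3, 6}, {1, 3}, {3, 5}, {4, 6}, {2, 6}}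

def L1 : Finset (Finset (Finset (ZMod 6))) :=
  {{({1, 4} : Finset (ZMod 6))},
   {({1, 3} : Finset (ZMod 6)), {1, 4}},
   {({1, 4} : Finset (ZMod 6)), {2, 4}},
   {({1, 4} : Finset (ZMod 6)), {4, 6}},
   {({1, 4} : Finset (ZMod 6)), {1, 5}},
   {({1, 3} : Finset (ZMod 6)), {1, 4}, {4, 6}},
   {({1, 3} : Finset (ZMod 6)), {1, 4}, {1, 5}},
   {({1, 4} : Finset (ZMod 6)), {2, 4}, {4, 6}},
   {({1, 4} : Finset (ZMod 6)), {1, 5}, {2, 4}}}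
def L2 : Finset (Finset (Finset (ZMod 6))) :=
  {{({2, 5} : Finset (ZMod 6))},
   {({2, 4} : Finset (ZMod 6)), {2, 5}},
   {({2, 5} : Finset (ZMod 6)), {3, 5}},
   {({1, 5} : Finset (ZMod 6)), {2, 5}},
   {({2, 5} : Finset (ZMod 6)), {2, 6}},
   {({1, 5} : Finset (ZMod 6)), {2, 4}, {2, 5}},
   {({2, 4} : Finset (ZMod 6)), {2, 5}, {2, 6}},
   {({1, 5} : Finset (ZMod 6)), {2, 5}, {3, 5}},
   {({2, 5} : Finset (ZMod 6)), {2, 6}, {3, 5}}}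
def L3 : Finset (Finset (Finset (ZMod 6))) :=
  {{({3, 6} : Finset (ZMod 6))},
   {({1, 3} : Finset (ZMod 6)), {3, 6}},
   {({3, 5} : Finset (ZMod 6)), {3, 6}},
   {({3, 6} : Finset (ZMod 6)), {4, 6}},
   {({2, 6} : Finset (ZMod 6)), {3, 6}},
   {({1, 3} : Finset (ZMod 6)), {3, 5}, {3, 6}},
   {({1, 3} : Finset (ZMod 6)), {3, 6}, {4, 6}},
   {({2, 6} : Finset (ZMod 6)), {3, 5}, {3, 6}},
   {({2, 6} : Finset (ZMod 6)), {3, 6}, {4, 6}}}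

lemma interior_iff_mem : ∀ e : Finset (ZMod 6), InteriorEdge e ↔ e ∈ E9 := by decide

lemma cross_l12 : Crosses {1, 4} {2, 5} := by decide
lemma cross_l13 : Crosses {1, 4} {3, 6} := by decide
lemma cross_l23 : Crosses {2, 5} {3, 6} := by decide

lemma memS1 : ∀ e ∈ E9, e ∉ S1 → Crosses {1, 4} e := by decide
lemma memS2 : ∀ e ∈ E9, e ∉ S2 → Crosses {2, 5} e := by decide
lemma memS3 : ∀ e ∈ E9, e ∉ S3 → Crosses {3, 6} e := by decide

lemma cross_f11 : Crosses ({1,3} : Finset (ZMod 6)) {2,4} := by decide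
lemma cross_f12 : Crosses ({4,6} : Finset (ZMod 6)) {1,5} := by decide
lemma cross_f21 : Crosses ({2,4} : Finset (ZMod 6)) {3,5} := by decide
lemma cross_f22 : Crosses ({1,5} : Finset (ZMod 6)) {2,6} := by decide
lemma cross_f31 : Crosses ({3,5} : Finset (ZMod 6)) {4,6} := by decide
lemma cross_f32 : Crosses ({2,6} : Finset (ZMod 6)) {1,3} := by decide

lemma stage1 (C : Finset (Finset (ZMod 6))) (hsub : C ⊆ S1)
    (hl : ({1,4} : Finset (ZMod 6)) ∈ C)
    (h1 : ¬(({1,3} : Finset (ZMod 6)) ∈ C ∧ ({2,4} : Finset (ZMod 6)) ∈ C))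
    (h2 : ¬(({4,6} : Finset (ZMod 6)) ∈ C ∧ ({1,5} : Finset (ZMod 6)) ∈ C)) : C ∈ L1 := by
  have hC : S1 ∩ C = C := Finset.inter_eq_right.mpr hsub
  by_cases hb1 : ({1,3} : Finset (ZMod 6)) ∈ C <;>
  by_cases hb2 : ({2,4} : Finset (ZMod 6)) ∈ C <;>
  by_cases hb3 : ({4,6} : Finset (ZMod 6)) ∈ C <;>
  by_cases hb4 : ({1,5} : Finset (ZMod 6)) ∈ C <;>
  first
  | (refine absurd ⟨?_, ?_⟩ h1 <;> assumption)
  | (refine absurd ⟨?_, ?_⟩ h2 <;> assumption)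
  | (rw [← hC, show S1 = {{1, 4}, {1, 3}, {2, 4}, {4, 6}, {1, 5}} from rfl, Finset.insert_inter_of_mem hl]
     first | rw [Finset.insert_inter_of_mem hb1] | rw [Finset.insert_inter_of_notMem hb1]
     first | rw [Finset.insert_inter_of_mem hb2] | rw [Finset.insert_inter_of_notMem hb2]
     first | rw [Finset.insert_inter_of_mem hb3] | rw [Finset.insert_inter_of_notMem hb3]
     first | rw [Finset.singleton_inter_of_mem hb4] | rw [Finset.singleton_inter_of_notMem hb4]
     decide)

lemma stage1' (C : Finset (Finset (ZMod 6))) (hsub : C ⊆ S2)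
    (hl : ({2,5} : Finset (ZMod 6)) ∈ C)
    (h1 : ¬(({2,4} : Finset (ZMod 6)) ∈ C ∧ ({3,5} : Finset (ZMod 6)) ∈ C))
    (h2 : ¬(({1,5} : Finset (ZMod 6)) ∈ C ∧ ({2,6} : Finset (ZMod 6)) ∈ C)) : C ∈ L2 := by
  have hC : S2 ∩ C = C := Finset.inter_eq_right.mpr hsub
  by_cases hb1 : ({2,4} : Finset (ZMod 6)) ∈ C <;>
  by_cases hb2 : ({3,5} : Finset (ZMod 6)) ∈ C <;>
  by_cases hb3 : ({1,5} : Finset (ZMod 6)) ∈ C <;>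
  by_cases hb4 : ({2,6} : Finset (ZMod 6)) ∈ C <;>
  first
  | (refine absurd ⟨?_, ?_⟩ h1 <;> assumption)
  | (refine absurd ⟨?_, ?_⟩ h2 <;> assumption)
  | (rw [← hC, show S2 = {{2, 5}, {2, 4}, {3, 5}, {1, 5}, {2, 6}} from rfl, Finset.insert_inter_of_mem hl]
     first | rw [Finset.insert_inter_of_mem hb1] | rw [Finset.insert_inter_of_notMem hb1]
     first | rw [Finset.insert_inter_of_mem hb2] | rw [Finset.insert_inter_of_notMem hb2]
     first | rw [Finset.insert_inter_of_mem hb3] | rw [Finset.insert_inter_of_notMem hb3]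
     first | rw [Finset.singleton_inter_of_mem hb4] | rw [Finset.singleton_inter_of_notMem hb4]
     decide)

lemma stage1'' (C : Finset (Finset (ZMod 6))) (hsub : C ⊆ S3)
    (hl : ({3,6} : Finset (ZMod 6)) ∈ C)
    (h1 : ¬(({3,5} : Finset (ZMod 6)) ∈ C ∧ ({4,6} : Finset (ZMod 6)) ∈ C))
    (h2 : ¬(({2,6} : Finset (ZMod 6)) ∈ C ∧ ({1,3} : Finset (ZMod 6)) ∈ C)) : C ∈ L3 := by
  have hC : S3 ∩ C = C := Finset.inter_eq_right.mpr hsub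
  by_cases hb1 : ({1,3} : Finset (ZMod 6)) ∈ C <;>
  by_cases hb2 : ({3,5} : Finset (ZMod 6)) ∈ C <;>
  by_cases hb3 : ({4,6} : Finset (ZMod 6)) ∈ C <;>
  by_cases hb4 : ({2,6} : Finset (ZMod 6)) ∈ C <;>
  first
  | (refine absurd ⟨?_, ?_⟩ h1 <;> assumption)
  | (refine absurd ⟨?_, ?_⟩ h2 <;> assumption)
  | (rw [← hC, show S3 = {{3, 6}, {1, 3}, {3, 5}, {4, 6}, {2, 6}} from rfl, Finset.insert_inter_of_mem hl]
     first | rw [Finset.insert_inter_of_mem hb1] | rw [Finset.insert_inter_of_notMem hb1]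
     first | rw [Finset.insert_inter_of_mem hb2] | rw [Finset.insert_inter_of_notMem hb2]
     first | rw [Finset.insert_inter_of_mem hb3] | rw [Finset.insert_inter_of_notMem hb3]
     first | rw [Finset.singleton_inter_of_mem hb4] | rw [Finset.singleton_inter_of_notMem hb4]
     decide)

lemma stage2 : ∀ C1 ∈ L1, ∀ C2 ∈ L2, ∀ C3 ∈ L3,
    Disjoint C1 C2 → Disjoint C1 C3 → Disjoint C2 C3 →
    (∀ e ∈ E9, e ∈ C1 ∨ e ∈ C2 ∨ e ∈ C3) →
    ({C1, C2, C3} : Finset (Finset (Finset (ZMod 6)))) = partA ∨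
      ({C1, C2, C3} : Finset (Finset (Finset (ZMod 6)))) = partB := by decide

lemma part_good_aux (p : Finset (Finset (Finset (ZMod 6)))) (hp : p = partA ∨ p = partB) :
    IsSheetPartition p ∧ p.card = 3 := by
  rcases hp with rfl | rfl <;>
  · refine ⟨⟨?_, ?_, ?_, ?_⟩, ?_⟩
    · simp only [partA, partB, Finset.forall_mem_insert, Finset.mem_singleton, forall_eq]
      repeat' apply And.intro
      all_goals exact ⟨_, Finset.mem_insert_self _ _⟩
    · simp only [partA, partB, Finset.forall_mem_insert, Finset.mem_singleton, forall_eq]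
      repeat' apply And.intro
      all_goals (intro h; first | exact absurd rfl h | decide)
    · intro e
      rw [interior_iff_mem]
      simp only [partA, partB, Finset.exists_mem_insert, Finset.mem_singleton, exists_eq_left]
      revert e; decide
    · simp only [partA, partB, Finset.forall_mem_insert, Finset.mem_singleton, forall_eq]
      repeat' apply And.intro
      all_goals (intro h; first | exact absurd rfl h | decide)
    · decide
end Aux
/-- There are exactly two (unordered) partitions of the nine interior edges of `K₆` into
three classes of pairwise noncrossing edges, namely
`{{13,14,46},{15,24,25},{26,35,36}}` and `{{13,36,46},{14,15,24},{25,26,35}}`. -/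
theorem stmt_10 :
    {P : Finset (Finset (Finset (ZMod 6))) | IsSheetPartition P ∧ P.card = 3} =
      {partA, partB} := by
  ext P
  simp only [Set.mem_setOf_eq, Set.mem_insert_iff, Set.mem_singleton_iff]
  constructor
  · rintro ⟨⟨hne, hdisj, hcov, hnc⟩, hcard⟩
    obtain ⟨C1, hC1P, hl1⟩ := (hcov {1, 4}).mp (by decide)
    obtain ⟨C2, hC2P, hl2⟩ := (hcov {2, 5}).mp (by decide)
    obtain ⟨C3, hC3P, hl3⟩ := (hcov {3, 6}).mp (by decide)
    have h12 : C1 ≠ C2 := by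
      rintro rfl; exact hnc C1 hC1P _ hl1 _ hl2 (by decide) cross_l12
    have h13 : C1 ≠ C3 := by
      rintro rfl; exact hnc C1 hC1P _ hl1 _ hl3 (by decide) cross_l13
    have h23 : C2 ≠ C3 := by
      rintro rfl; exact hnc C2 hC2P _ hl2 _ hl3 (by decide) cross_l23
    have hsub : ({C1, C2, C3} : Finset (Finset (Finset (ZMod 6)))) ⊆ P := by
      intro C hC
      simp only [Finset.mem_insert, Finset.mem_singleton] at hC
      rcases hC with rfl | rfl | rfl <;> assumption
    have hcard3 : ({C1, C2, C3} : Finset (Finset (Finset (ZMod 6)))).card = 3 := by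
      rw [Finset.card_insert_of_notMem (by simp [h12, h13]),
        Finset.card_insert_of_notMem (by simp [h23]), Finset.card_singleton]
    have hPeq : ({C1, C2, C3} : Finset (Finset (Finset (ZMod 6)))) = P :=
      Finset.eq_of_subset_of_card_le hsub (by rw [hcard, hcard3])
    -- each class is a subset of its allowed set
    have hmem : ∀ C ∈ P, ∀ e ∈ C, e ∈ E9 := by
      intro C hC e he
      exact (interior_iff_mem e).mp ((hcov e).mpr ⟨C, hC, he⟩)
    have hsubS : ∀ (C : Finset (Finset (ZMod 6))) (l : Finset (ZMod 6))
        (S : Finset (Finset (ZMod 6))), C ∈ P → l ∈ C → l ∈ S →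
        (∀ e ∈ E9, e ∉ S → Crosses l e) → C ⊆ S := by
      intro C l S hC hlC hlS hS
      intro e he
      by_contra heS
      have hel : e ≠ l := by rintro rfl; exact heS hlS
      exact hnc C hC l hlC e he (Ne.symm hel) (hS e (hmem C hC e he) heS)
    have hC1 : C1 ∈ L1 := by
      refine stage1 C1 (hsubS C1 {1, 4} S1 hC1P hl1 (by decide) memS1) hl1 ?_ ?_
      · rintro ⟨ha, hb⟩; exact hnc C1 hC1P _ ha _ hb (by decide) cross_f11
      · rintro ⟨ha, hb⟩; exact hnc C1 hC1P _ ha _ hb (by decide) cross_f12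
    have hC2 : C2 ∈ L2 := by
      refine stage1' C2 (hsubS C2 {2, 5} S2 hC2P hl2 (by decide) memS2) hl2 ?_ ?_
      · rintro ⟨ha, hb⟩; exact hnc C2 hC2P _ ha _ hb (by decide) cross_f21
      · rintro ⟨ha, hb⟩; exact hnc C2 hC2P _ ha _ hb (by decide) cross_f22
    have hC3 : C3 ∈ L3 := by
      refine stage1'' C3 (hsubS C3 {3, 6} S3 hC3P hl3 (by decide) memS3) hl3 ?_ ?_
      · rintro ⟨ha, hb⟩; exact hnc C3 hC3P _ ha _ hb (by decide) cross_f31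
      · rintro ⟨ha, hb⟩; exact hnc C3 hC3P _ ha _ hb (by decide) cross_f32
    have hcover : ∀ e ∈ E9, e ∈ C1 ∨ e ∈ C2 ∨ e ∈ C3 := by
      intro e he
      obtain ⟨C, hCP, heC⟩ := (hcov e).mp ((interior_iff_mem e).mpr he)
      rw [← hPeq] at hCP
      simp only [Finset.mem_insert, Finset.mem_singleton] at hCP
      rcases hCP with rfl | rfl | rfl
      · exact Or.inl heC
      · exact Or.inr (Or.inl heC)
      · exact Or.inr (Or.inr heC)
    have := stage2 C1 hC1 C2 hC2 C3 hC3 (hdisj C1 hC1P C2 hC2P h12)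
      (hdisj C1 hC1P C3 hC3P h13) (hdisj C2 hC2P C3 hC3P h23) hcover
    rw [← hPeq]
    exact this
  · rintro (rfl | rfl)
    · exact part_good_aux _ (Or.inl rfl)
    · exact part_good_aux _ (Or.inr rfl)
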